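/- A finite set E of d points in Z^2 is a minimizer of the edge perimeter among d-element subsets of Z^2 if and only if #Θ₂(E) = 2⌈2√d⌉. -/

import Mathlib

open Finset Filter

/-- Adjacency in `ℤ²`: Euclidean distance one. -/
def adj2 (x y : ℤ × ℤ) : Prop :=
  (x.1 - y.1) ^ 2 + (x.2 - y.2) ^ 2 = 1

/-- Cardinality of the edge boundary `Θ₂(E)` in `ℤ²` (ordered pairs). -/
noncomputable def theta2 (E : Finset (ℤ × ℤ)) : ℕ :=
  Set.ncard {p : (ℤ × ℤ) × (ℤ × ℤ) | adj2 p.1 p.2 ∧ p.1 ∈ E ∧ p.2 ∉ E}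

/-- Number of ordered bonded pairs of `E ⊂ ℤ²`; this equals `2 b(E)`. -/
noncomputable def bondPairs2 (E : Finset (ℤ × ℤ)) : ℕ :=
  Set.ncard {p : (ℤ × ℤ) × (ℤ × ℤ) | adj2 p.1 p.2 ∧ p.1 ∈ E ∧ p.2 ∈ E}

/-- Number of unit bonds `b(E) = ½·#{(x,y) ∈ E×E : |x−y|=1}`. -/
noncomputable def bonds2 (E : Finset (ℤ × ℤ)) : ℕ := bondPairs2 E / 2

/-! ### Neighborhoods -/

/-- The four lattice neighbours of a point. -/
def nbhd (x : ℤ × ℤ) : Finset (ℤ × ℤ) :=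
  {(x.1+1,x.2), (x.1-1,x.2), (x.1,x.2+1), (x.1,x.2-1)}

lemma adj2_iff_mem (x y : ℤ × ℤ) : adj2 x y ↔ y ∈ nbhd x := by
  unfold adj2 nbhd
  simp only [Finset.mem_insert, Finset.mem_singleton, Prod.ext_iff]
  constructor
  · intro h
    have h1a : -1 ≤ x.1 - y.1 := by nlinarith [sq_nonneg (x.2 - y.2), sq_nonneg (x.1 - y.1 + 1)]
    have h1b : x.1 - y.1 ≤ 1 := by nlinarith [sq_nonneg (x.2 - y.2), sq_nonneg (x.1 - y.1 - 1)]
    have h2a : -1 ≤ x.2 - y.2 := by nlinarith [sq_nonneg (x.1 - y.1), sq_nonneg (x.2 - y.2 + 1)]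
    have h2b : x.2 - y.2 ≤ 1 := by nlinarith [sq_nonneg (x.1 - y.1), sq_nonneg (x.2 - y.2 - 1)]
    have h1 : x.1 - y.1 = -1 ∨ x.1 - y.1 = 0 ∨ x.1 - y.1 = 1 := by omega
    have h2 : x.2 - y.2 = -1 ∨ x.2 - y.2 = 0 ∨ x.2 - y.2 = 1 := by omega
    rcases h1 with h1|h1|h1 <;> rcases h2 with h2|h2|h2 <;> simp [h1, h2] at h ⊢ <;> omega
  · rintro (⟨h1,h2⟩|⟨h1,h2⟩|⟨h1,h2⟩|⟨h1,h2⟩) <;> rw [h1, h2] <;> ring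

lemma nbhd_card (x : ℤ × ℤ) : (nbhd x).card = 4 := by
  unfold nbhd
  rw [card_insert_of_notMem, card_insert_of_notMem, card_insert_of_notMem, card_singleton] <;>
    simp [Prod.ext_iff] <;> omega

/-! ### Finite model of the incidence sets -/

/-- All ordered pairs `(x, y)` with `x ∈ E` and `y` a neighbour of `x`. -/
def Sfin (E : Finset (ℤ × ℤ)) : Finset ((ℤ × ℤ) × (ℤ × ℤ)) :=
  E.biUnion (fun x => (nbhd x).image (fun y => (x, y)))

lemma mem_Sfin {E : Finset (ℤ × ℤ)} {p : (ℤ × ℤ) × (ℤ × ℤ)} :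
    p ∈ Sfin E ↔ adj2 p.1 p.2 ∧ p.1 ∈ E := by
  unfold Sfin
  simp only [mem_biUnion, mem_image, adj2_iff_mem]
  constructor
  · rintro ⟨x, hx, y, hy, rfl⟩; exact ⟨hy, hx⟩
  · rintro ⟨h1, h2⟩; exact ⟨p.1, h2, p.2, h1, rfl⟩

lemma Sfin_card (E : Finset (ℤ × ℤ)) : (Sfin E).card = 4 * E.card := by
  unfold Sfin
  rw [card_biUnion]
  · rw [Finset.sum_congr rfl (fun x _ => ?_), Finset.sum_const, smul_eq_mul, mul_comm]
    rw [Finset.card_image_of_injective _ (fun a b h => by injection h), nbhd_card]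
  · intro x _ y _ hxy
    simp only [Finset.disjoint_left, mem_image]
    rintro p ⟨a, _, rfl⟩ ⟨b, _, h⟩
    exact hxy (by injection h with h1 _; exact h1.symm)

lemma theta2_eq (E : Finset (ℤ × ℤ)) :
    theta2 E = ((Sfin E).filter (fun p => p.2 ∉ E)).card := by
  rw [theta2, ← Set.ncard_coe_finset]
  congr 1
  ext p
  simp only [Finset.coe_filter, Set.mem_setOf_eq, mem_Sfin]
  tauto

lemma bondPairs2_eq (E : Finset (ℤ × ℤ)) :
    bondPairs2 E = ((Sfin E).filter (fun p => p.2 ∈ E)).card := by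
  rw [bondPairs2, ← Set.ncard_coe_finset]
  congr 1
  ext p
  simp only [Finset.coe_filter, Set.mem_setOf_eq, mem_Sfin]
  tauto

lemma theta2_add_bondPairs2 (E : Finset (ℤ × ℤ)) :
    theta2 E + bondPairs2 E = 4 * E.card := by
  rw [theta2_eq, bondPairs2_eq, ← Sfin_card E]
  rw [add_comm]
  exact Finset.card_filter_add_card_filter_not _

lemma theta2_empty : theta2 ∅ = 0 := by
  rw [theta2]
  convert Set.ncard_empty ((ℤ × ℤ) × (ℤ × ℤ)) using 2
  ext p
  simp

/-! ### Bond pairs via horizontal/vertical shifts -/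

/-- horizontal bond starters -/
def hfS (E : Finset (ℤ × ℤ)) : Finset (ℤ × ℤ) := E.filter (fun x => (x.1+1, x.2) ∈ E)
/-- vertical bond starters -/
def vfS (E : Finset (ℤ × ℤ)) : Finset (ℤ × ℤ) := E.filter (fun x => (x.1, x.2+1) ∈ E)

lemma card_shiftF (E : Finset (ℤ × ℤ)) (f : ℤ × ℤ → ℤ × ℤ) (hadj : ∀ x, adj2 x (f x)) :
    ((Sfin E).filter (fun p => p.2 ∈ E ∧ p.2 = f p.1)).card
      = (E.filter (fun x => f x ∈ E)).card := by
  apply Finset.card_bij (fun p _ => p.1)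
  · rintro p hp
    simp only [mem_filter, mem_Sfin] at hp ⊢
    exact ⟨hp.1.2, hp.2.2 ▸ hp.2.1⟩
  · rintro p hp q hq h
    simp only [mem_filter] at hp hq
    exact Prod.ext h (by rw [hp.2.2, hq.2.2, h])
  · rintro x hx
    simp only [mem_filter] at hx
    exact ⟨(x, f x), by simp only [mem_filter, mem_Sfin]; exact ⟨⟨hadj x, hx.1⟩, hx.2, trivial⟩, rfl⟩

lemma card_hf' (E : Finset (ℤ × ℤ)) :
    (E.filter (fun x => (x.1-1, x.2) ∈ E)).card = (hfS E).card := by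
  apply Finset.card_bij (fun x _ => ((x.1 - 1 : ℤ), x.2))
  · rintro x hx
    simp only [mem_filter, hfS] at hx ⊢
    refine ⟨hx.2, ?_⟩
    simpa [sub_add_cancel] using hx.1
  · rintro p _ q _ h
    simp only [Prod.ext_iff] at h
    exact Prod.ext (by omega) h.2
  · rintro y hy
    simp only [hfS, mem_filter] at hy
    exact ⟨(y.1 + 1, y.2), by simp only [mem_filter]; constructor
                              · exact hy.2
                              · simpa using hy.1, by simp⟩

lemma card_vf' (E : Finset (ℤ × ℤ)) :
    (E.filter (fun x => (x.1, x.2-1) ∈ E)).card = (vfS E).card := by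
  apply Finset.card_bij (fun x _ => (x.1, (x.2 - 1 : ℤ)))
  · rintro x hx
    simp only [mem_filter, vfS] at hx ⊢
    refine ⟨hx.2, ?_⟩
    simpa [sub_add_cancel] using hx.1
  · rintro p _ q _ h
    simp only [Prod.ext_iff] at h
    exact Prod.ext h.1 (by omega)
  · rintro y hy
    simp only [vfS, mem_filter] at hy
    exact ⟨(y.1, y.2 + 1), by simp only [mem_filter]; constructor
                              · exact hy.2
                              · simpa using hy.1, by simp⟩

lemma bondPairs2_eq_shifts (E : Finset (ℤ × ℤ)) :
    bondPairs2 E = 2 * (hfS E).card + 2 * (vfS E).card := by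
  rw [bondPairs2_eq]
  classical
  set T := (Sfin E).filter (fun p => p.2 ∈ E) with hT
  have hsplit : T = (T.filter (fun p => p.2 = (p.1.1+1, p.1.2)))
      ∪ (T.filter (fun p => p.2 = (p.1.1-1, p.1.2)))
      ∪ (T.filter (fun p => p.2 = (p.1.1, p.1.2+1)))
      ∪ (T.filter (fun p => p.2 = (p.1.1, p.1.2-1))) := by
    ext p
    simp only [hT, mem_union, mem_filter, mem_Sfin, adj2_iff_mem, nbhd,
      Finset.mem_insert, Finset.mem_singleton, Prod.ext_iff]
    constructor
    · intro h
      rcases h.1.1 with h'|h'|h'|h'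
      · exact Or.inl (Or.inl (Or.inl ⟨h, h'⟩))
      · exact Or.inl (Or.inl (Or.inr ⟨h, h'⟩))
      · exact Or.inl (Or.inr ⟨h, h'⟩)
      · exact Or.inr ⟨h, h'⟩
    · rintro (((⟨h,_⟩|⟨h,_⟩)|⟨h,_⟩)|⟨h,_⟩) <;> exact h
  have d12 : Disjoint (T.filter (fun p => p.2 = (p.1.1+1, p.1.2)))
      (T.filter (fun p => p.2 = (p.1.1-1, p.1.2))) := by
    simp only [disjoint_left, mem_filter]
    rintro p ⟨_, h1⟩ ⟨_, h2⟩
    rw [h1] at h2; simp only [Prod.ext_iff] at h2; omega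
  have d123 : Disjoint ((T.filter (fun p => p.2 = (p.1.1+1, p.1.2)))
      ∪ (T.filter (fun p => p.2 = (p.1.1-1, p.1.2))))
      (T.filter (fun p => p.2 = (p.1.1, p.1.2+1))) := by
    simp only [disjoint_left, mem_union, mem_filter]
    rintro p (⟨_, h1⟩|⟨_, h1⟩) ⟨_, h2⟩ <;>
      (rw [h1] at h2; simp only [Prod.ext_iff] at h2; omega)
  have d1234 : Disjoint ((T.filter (fun p => p.2 = (p.1.1+1, p.1.2)))
      ∪ (T.filter (fun p => p.2 = (p.1.1-1, p.1.2)))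
      ∪ (T.filter (fun p => p.2 = (p.1.1, p.1.2+1))))
      (T.filter (fun p => p.2 = (p.1.1, p.1.2-1))) := by
    simp only [disjoint_left, mem_union, mem_filter]
    rintro p ((⟨_, h1⟩|⟨_, h1⟩)|⟨_, h1⟩) ⟨_, h2⟩ <;>
      (rw [h1] at h2; simp only [Prod.ext_iff] at h2; omega)
  rw [hsplit, card_union_of_disjoint d1234, card_union_of_disjoint d123,
    card_union_of_disjoint d12]
  have adjs : ∀ (u v : ℤ), u^2 + v^2 = 1 → ∀ x : ℤ × ℤ, adj2 x (x.1 + u, x.2 + v) := by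
    intro u v huv x
    unfold adj2; simp only; ring_nf; linarith [huv]
  have c1 : (T.filter (fun p => p.2 = (p.1.1+1, p.1.2))).card = (hfS E).card := by
    rw [hT, filter_filter]
    exact card_shiftF E (fun x => (x.1+1, x.2))
      (by intro x; have := adjs 1 0 (by ring) x; simpa using this)
  have c2 : (T.filter (fun p => p.2 = (p.1.1-1, p.1.2))).card = (hfS E).card := by
    rw [hT, filter_filter]
    rw [card_shiftF E (fun x => (x.1-1, x.2))
      (by intro x; have := adjs (-1) 0 (by ring) x; simpa [sub_eq_add_neg] using this)]
    exact card_hf' E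
  have c3 : (T.filter (fun p => p.2 = (p.1.1, p.1.2+1))).card = (vfS E).card := by
    rw [hT, filter_filter]
    exact card_shiftF E (fun x => (x.1, x.2+1))
      (by intro x; have := adjs 0 1 (by ring) x; simpa using this)
  have c4 : (T.filter (fun p => p.2 = (p.1.1, p.1.2-1))).card = (vfS E).card := by
    rw [hT, filter_filter]
    rw [card_shiftF E (fun x => (x.1, x.2-1))
      (by intro x; have := adjs 0 (-1) (by ring) x; simpa [sub_eq_add_neg] using this)]
    exact card_vf' E
  rw [c1, c2, c3, c4]; ring

/-! ### The isoperimetric lower bound -/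

lemma hfS_row_bound (E : Finset (ℤ × ℤ)) (y : ℤ) (hy : y ∈ E.image Prod.snd) :
    ((hfS E).filter (fun x => x.2 = y)).card + 1 ≤ (E.filter (fun x => x.2 = y)).card := by
  classical
  set R := E.filter (fun x => x.2 = y) with hR
  set Hy := (hfS E).filter (fun x => x.2 = y) with hHy
  have hne : (R.image Prod.fst).Nonempty := by
    obtain ⟨x, hx, hxy⟩ := mem_image.mp hy
    exact ⟨x.1, mem_image_of_mem _ (mem_filter.mpr ⟨hx, hxy⟩)⟩
  set m := (R.image Prod.fst).min' hne with hm
  have hmR : (m, y) ∈ R := by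
    have := (R.image Prod.fst).min'_mem hne
    obtain ⟨x, hxR, hxm⟩ := mem_image.mp this
    have hxy : x.2 = y := (mem_filter.mp hxR).2
    have : x = (m, y) := Prod.ext hxm hxy
    rwa [this] at hxR
  have hsub : Hy.image (fun x => ((x.1 + 1 : ℤ), y)) ⊆ R.erase (m, y) := by
    intro z hz
    obtain ⟨x, hx, rfl⟩ := mem_image.mp hz
    simp only [hHy, hfS, mem_filter] at hx
    obtain ⟨⟨hxE, hxsh⟩, hxy⟩ := hx
    have hzR : ((x.1 + 1 : ℤ), y) ∈ R := by
      rw [hR, mem_filter]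
      exact ⟨by rwa [← hxy], rfl⟩
    refine mem_erase.mpr ⟨?_, hzR⟩
    intro hcon
    have h1 : x.1 + 1 = m := (Prod.ext_iff.mp hcon).1
    have hxI : x.1 ∈ R.image Prod.fst :=
      mem_image_of_mem _ (mem_filter.mpr ⟨hxE, hxy⟩)
    have := (R.image Prod.fst).min'_le _ hxI
    omega
  have hinj : Set.InjOn (fun x : ℤ × ℤ => ((x.1 + 1 : ℤ), y)) Hy := by
    intro p hp q hq h
    simp only [Prod.ext_iff] at h
    simp only [hHy, mem_coe, mem_filter] at hp hq
    exact Prod.ext (by omega) (hp.2.trans hq.2.symm)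
  have hcard : Hy.card = (Hy.image (fun x => ((x.1 + 1 : ℤ), y))).card :=
    (Finset.card_image_of_injOn hinj).symm
  have h1 : (Hy.image (fun x => ((x.1 + 1 : ℤ), y))).card ≤ (R.erase (m, y)).card :=
    Finset.card_le_card hsub
  have h2 : (R.erase (m, y)).card = R.card - 1 := Finset.card_erase_of_mem hmR
  have h3 : 1 ≤ R.card := Finset.card_pos.mpr ⟨(m, y), hmR⟩
  omega

lemma hfS_bound (E : Finset (ℤ × ℤ)) :
    (hfS E).card + (E.image Prod.snd).card ≤ E.card := by
  classical
  have hmapE : ∀ x ∈ E, Prod.snd x ∈ E.image Prod.snd := fun x hx => mem_image_of_mem _ hx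
  have hmapH : ∀ x ∈ hfS E, Prod.snd x ∈ E.image Prod.snd := fun x hx =>
    mem_image_of_mem _ (mem_filter.mp hx).1
  rw [Finset.card_eq_sum_card_fiberwise hmapE, Finset.card_eq_sum_card_fiberwise hmapH,
    Finset.card_eq_sum_ones (E.image Prod.snd), ← Finset.sum_add_distrib]
  exact Finset.sum_le_sum (fun y hy => hfS_row_bound E y hy)

lemma mem_image_swap {E : Finset (ℤ × ℤ)} {z : ℤ × ℤ} :
    z ∈ E.image Prod.swap ↔ z.swap ∈ E := by
  constructor
  · rintro h
    obtain ⟨x, hx, rfl⟩ := Finset.mem_image.mp h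
    simpa using hx
  · intro h
    exact Finset.mem_image.mpr ⟨z.swap, h, Prod.swap_swap z⟩

lemma vfS_bound (E : Finset (ℤ × ℤ)) :
    (vfS E).card + (E.image Prod.fst).card ≤ E.card := by
  classical
  have key := hfS_bound (E.image Prod.swap)
  have h1 : hfS (E.image Prod.swap) = (vfS E).image Prod.swap := by
    ext z
    rw [mem_image_swap]
    simp only [hfS, vfS, mem_filter, mem_image_swap]
    rfl
  have h2 : (E.image Prod.swap).image Prod.snd = E.image Prod.fst := by
    rw [Finset.image_image]
    rfl
  have h3 : (E.image Prod.swap).card = E.card :=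
    Finset.card_image_of_injective _ Prod.swap_injective
  have h4 : ((vfS E).image Prod.swap).card = (vfS E).card :=
    Finset.card_image_of_injective _ Prod.swap_injective
  rw [h1, h2, h3, h4] at key
  exact key

/-! ### Ceiling arithmetic -/

lemma ceil_ge_of_sq_lt (d k : ℕ) (hk : 1 ≤ k) (h : (k-1)*(k-1) < 4*d) :
    (k : ℤ) ≤ ⌈2 * Real.sqrt d⌉ := by
  rw [show (k:ℤ) = (k:ℤ) - 1 + 1 by ring, Int.add_one_le_iff, Int.lt_ceil]
  have h2 : 2 * Real.sqrt d = Real.sqrt (4*d) := by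
    rw [show (4:ℝ)*d = (2:ℝ)^2 * d by ring, Real.sqrt_mul (by positivity),
      Real.sqrt_sq (by norm_num)]
  rw [h2]
  rw [show (((k:ℤ) - 1 : ℤ) : ℝ) = ((k - 1 : ℕ) : ℝ) by push_cast [Nat.cast_sub hk]; ring]
  rw [show ((4:ℝ)*d) = ((4*d : ℕ) : ℝ) by push_cast; ring]
  apply Real.lt_sqrt (by positivity) |>.mpr
  have : ((k-1:ℕ):ℝ)^2 = (((k-1)*(k-1) : ℕ) : ℝ) := by push_cast; ring
  rw [this]
  exact_mod_cast h

lemma ceil_le_of_sq_ge (d n : ℕ) (h : 4 * d ≤ n * n) :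
    (⌈2 * Real.sqrt d⌉ : ℤ) ≤ n := by
  apply Int.ceil_le.mpr
  have h2 : 2 * Real.sqrt d = Real.sqrt (4*d) := by
    rw [show (4:ℝ)*d = (2:ℝ)^2 * d by ring, Real.sqrt_mul (by positivity),
      Real.sqrt_sq (by norm_num)]
  rw [h2]
  have h3 : ((n:ℤ):ℝ) = Real.sqrt ((n:ℝ)^2) := by rw [Real.sqrt_sq (by positivity)]; norm_num
  rw [h3]
  apply Real.sqrt_le_sqrt
  have : ((4*d : ℕ):ℝ) ≤ ((n*n : ℕ) : ℝ) := by exact_mod_cast h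
  push_cast at this ⊢
  nlinarith [this]

/-- The sharp lower bound: any `d`-set has edge perimeter at least `2⌈2√d⌉`. -/
lemma theta2_lower (E : Finset (ℤ × ℤ)) :
    2 * ⌈2 * Real.sqrt (E.card : ℕ)⌉ ≤ (theta2 E : ℤ) := by
  classical
  set p := (E.image Prod.fst).card with hp
  set q := (E.image Prod.snd).card with hq
  have hd : E.card ≤ p * q := by
    rw [hp, hq, ← Finset.card_product]
    apply Finset.card_le_card
    intro x hx
    rw [Finset.mem_product]
    exact ⟨mem_image_of_mem _ hx, mem_image_of_mem _ hx⟩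
  have h1 := hfS_bound E
  have h2 := vfS_bound E
  have hsum := theta2_add_bondPairs2 E
  have hb := bondPairs2_eq_shifts E
  have hn : 2 * (p + q) ≤ theta2 E := by omega
  have hsq : 4 * E.card ≤ (p + q) * (p + q) := by nlinarith [two_mul_le_add_sq p q, hd]
  have hceil : (⌈2 * Real.sqrt (E.card : ℕ)⌉ : ℤ) ≤ (p + q : ℕ) :=
    ceil_le_of_sq_ge E.card (p + q) hsq
  have : ((2 * (p + q) : ℕ) : ℤ) ≤ (theta2 E : ℤ) := by exact_mod_cast hn
  push_cast at this hceil ⊢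
  linarith

/-! ### The quasi-square construction -/

/-- quasi-square: `a×b` rectangle plus `c` extra cells on top row -/
noncomputable def qsq (a b c : ℕ) : Finset (ℤ × ℤ) :=
  (Finset.Ico (0:ℤ) a ×ˢ Finset.Ico (0:ℤ) b) ∪ (Finset.Ico (0:ℤ) c ×ˢ {(b:ℤ)})

lemma qsq_card (a b c : ℕ) : (qsq a b c).card = a * b + c := by
  classical
  rw [qsq, Finset.card_union_of_disjoint, Finset.card_product, Finset.card_product]
  · simp [Int.card_Ico]
  · simp only [Finset.disjoint_left, Finset.mem_product, Finset.mem_Ico, Finset.mem_singleton]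
    rintro z ⟨_, _, h2⟩ ⟨_, h3⟩
    omega

lemma qsq_hfS (a b c : ℕ) (hc : c ≤ a) :
    hfS (qsq a b c) =
      (Finset.Ico (0:ℤ) ((a:ℤ)-1) ×ˢ Finset.Ico (0:ℤ) b) ∪
      (Finset.Ico (0:ℤ) ((c:ℤ)-1) ×ˢ {(b:ℤ)}) := by
  ext x
  simp only [hfS, qsq, mem_filter, mem_union, mem_product, Finset.mem_Ico, Finset.mem_singleton]
  omega

lemma qsq_vfS (a b c : ℕ) (hc : c ≤ a) (hb : 1 ≤ b) :
    vfS (qsq a b c) =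
      (Finset.Ico (0:ℤ) a ×ˢ Finset.Ico (0:ℤ) ((b:ℤ)-1)) ∪
      (Finset.Ico (0:ℤ) c ×ˢ {((b:ℤ)-1)}) := by
  ext x
  simp only [vfS, qsq, mem_filter, mem_union, mem_product, Finset.mem_Ico, Finset.mem_singleton]
  omega

lemma qsq_hfS_card (a b c : ℕ) (hc : c ≤ a) (ha : 1 ≤ a) :
    (hfS (qsq a b c)).card = (a - 1) * b + (c - 1) := by
  classical
  rw [qsq_hfS a b c hc, Finset.card_union_of_disjoint, Finset.card_product, Finset.card_product]
  · simp only [Int.card_Ico, Finset.card_singleton]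
    have h1 : ((a:ℤ) - 1 - 0).toNat = a - 1 := by omega
    have h2 : ((c:ℤ) - 1 - 0).toNat = c - 1 := by omega
    have h3 : ((b:ℤ) - 0).toNat = b := by omega
    rw [h1, h2, h3, mul_one]
  · simp only [Finset.disjoint_left, Finset.mem_product, Finset.mem_Ico, Finset.mem_singleton]
    rintro z ⟨_, _, h2⟩ ⟨_, h3⟩
    omega

lemma qsq_vfS_card (a b c : ℕ) (hc : c ≤ a) (hb : 1 ≤ b) :
    (vfS (qsq a b c)).card = a * (b - 1) + c := by
  classical
  rw [qsq_vfS a b c hc hb, Finset.card_union_of_disjoint, Finset.card_product,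
    Finset.card_product]
  · simp only [Int.card_Ico, Finset.card_singleton]
    have h1 : ((a:ℤ) - 0).toNat = a := by omega
    have h2 : ((b:ℤ) - 1 - 0).toNat = b - 1 := by omega
    have h3 : ((c:ℤ) - 0).toNat = c := by omega
    rw [h1, h2, h3, mul_one]
  · simp only [Finset.disjoint_left, Finset.mem_product, Finset.mem_Ico, Finset.mem_singleton]
    rintro z ⟨_, h1, _⟩ ⟨_, h3⟩
    omega

lemma qsq_theta2 (a b c : ℕ) (ha : 1 ≤ a) (hb : 1 ≤ b) (hc : c ≤ a) :
    theta2 (qsq a b c) = 2*a + 2*b + (if c = 0 then 0 else 2) := by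
  obtain ⟨a', rfl⟩ : ∃ a', a = a' + 1 := ⟨a - 1, by omega⟩
  obtain ⟨b', rfl⟩ : ∃ b', b = b' + 1 := ⟨b - 1, by omega⟩
  have hsum := theta2_add_bondPairs2 (qsq (a'+1) (b'+1) c)
  rw [bondPairs2_eq_shifts, qsq_hfS_card (a'+1) (b'+1) c hc ha,
    qsq_vfS_card (a'+1) (b'+1) c hc hb, qsq_card, Nat.add_sub_cancel, Nat.add_sub_cancel,
    show a'*(b'+1) = a'*b' + a' from by ring,
    show (a'+1)*b' = a'*b' + b' from by ring,
    show (a'+1)*(b'+1) = a'*b' + a' + b' + 1 from by ring] at hsum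
  rcases Nat.eq_zero_or_pos c with rfl|hcpos
  · rw [if_pos rfl]
    omega
  · rw [if_neg (by omega)]
    omega

/-- For every `d` there is a `d`-set achieving the bound. -/
lemma exists_good (d : ℕ) :
    ∃ F : Finset (ℤ × ℤ), F.card = d ∧ (theta2 F : ℤ) ≤ 2 * ⌈2 * Real.sqrt d⌉ := by
  rcases Nat.eq_zero_or_pos d with rfl|hd
  · refine ⟨∅, by simp, ?_⟩
    rw [theta2_empty]
    simp
  · set s := Nat.sqrt d with hs
    have hs1 : s * s ≤ d := by
      have := Nat.sqrt_le' d
      rwa [pow_two] at this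
    have hs2 : d < (s+1) * (s+1) := by
      have := Nat.lt_succ_sqrt' d
      rwa [Nat.succ_eq_add_one, pow_two] at this
    have hspos : 1 ≤ s := by
      rw [hs]
      exact Nat.sqrt_pos.mpr hd
    obtain ⟨u, hu⟩ : ∃ u, s = u + 1 := ⟨s - 1, by omega⟩
    by_cases h1 : d ≤ s * s + s
    · -- quasi-square on an s×s base
      set c := d - s * s with hcdef
      have hcs : c ≤ s := by omega
      refine ⟨qsq s s c, by rw [qsq_card]; omega, ?_⟩
      rw [qsq_theta2 s s c hspos hspos hcs]
      rcases Nat.eq_zero_or_pos c with hc0|hcpos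
      · have hds : d = s * s := by omega
        rw [hc0, if_pos rfl]
        have hkey : (2*s : ℤ) ≤ ⌈2 * Real.sqrt d⌉ := by
          apply ceil_ge_of_sq_lt d (2*s) (by omega)
          have he : 2*s - 1 = 2*u + 1 := by omega
          rw [he, hds, hu]
          nlinarith
        push_cast
        push_cast at hkey
        linarith
      · rw [if_neg (by omega)]
        have hkey : (2*s + 1 : ℤ) ≤ ⌈2 * Real.sqrt d⌉ := by
          have := ceil_ge_of_sq_lt d (2*s+1) (by omega) (by
            have he : 2*s + 1 - 1 = 2*s := by omega
            rw [he]
            have : s * s < d := by omega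
            nlinarith)
          push_cast at this ⊢
          linarith
        push_cast
        push_cast at hkey
        linarith
    · -- quasi-square on an (s+1)×s base
      set c := d - s * s - s with hcdef
      have hexp : (s+1)*(s+1) = s*s + 2*s + 1 := by ring
      have hcs : c ≤ s + 1 := by omega
      have hcpos : 1 ≤ c := by omega
      refine ⟨qsq (s+1) s c, by rw [qsq_card, show (s+1)*s = s*s + s from by ring]; omega, ?_⟩
      rw [qsq_theta2 (s+1) s c (by omega) hspos hcs]
      rw [if_neg (by omega)]
      have hkey : (2*s + 2 : ℤ) ≤ ⌈2 * Real.sqrt d⌉ := by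
        have := ceil_ge_of_sq_lt d (2*s+2) (by omega) (by
          have he : 2*s + 2 - 1 = 2*s + 1 := by omega
          rw [he]
          have : s * s + s < d := by omega
          nlinarith)
        push_cast at this ⊢
        linarith
      push_cast
      push_cast at hkey
      linarith

/-- a `d`-element `E ⊂ ℤ²` minimizes the edge perimeter iff
`#Θ₂(E) = 2⌈2√d⌉`. -/
theorem minimizer2_iff_perimeter (d : ℕ) (E : Finset (ℤ × ℤ)) (hE : E.card = d) :
    (∀ F : Finset (ℤ × ℤ), F.card = d → theta2 E ≤ theta2 F) ↔
      (theta2 E : ℤ) = 2 * ⌈(2 * Real.sqrt d)⌉ := by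
  have hlowE : 2 * ⌈2 * Real.sqrt d⌉ ≤ (theta2 E : ℤ) := by
    have := theta2_lower E
    rwa [hE] at this
  constructor
  · intro hmin
    obtain ⟨F, hFcard, hFle⟩ := exists_good d
    have h1 : theta2 E ≤ theta2 F := hmin F hFcard
    have h1' : (theta2 E : ℤ) ≤ (theta2 F : ℤ) := by exact_mod_cast h1
    linarith
  · intro heq F hF
    have hlowF : 2 * ⌈2 * Real.sqrt d⌉ ≤ (theta2 F : ℤ) := by
      have := theta2_lower F
      rwa [hF] at this
    have : (theta2 E : ℤ) ≤ (theta2 F : ℤ) := by linarith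
    exact_mod_cast this
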